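/- Let t > ⌊ℓ/2⌋ where ℓ is the smallest integer j with C(j, ⌊j/2⌋) ≥ k - 1, and let C be an initial segment of the colex order on t-element sets of size at most k - 1. Then ν(C) = |C|, i.e. there is a matching from C into its shadow ∂C saturating C. -/

import Mathlib

/-- A family of finsets that is a chain under inclusion. -/
def IsChainF (C : Finset (Finset ℕ)) : Prop :=
  ∀ A ∈ C, ∀ B ∈ C, A ⊆ B ∨ B ⊆ A

/-- A skipless chain: a chain in which every cardinality between those of two
members is attained by some member. -/
def SkiplessChain (C : Finset (Finset ℕ)) : Prop :=
  IsChainF C ∧ ∀ A ∈ C, ∀ B ∈ C, ∀ k : ℕ, A.card ≤ k → k ≤ B.card → ∃ D ∈ C, D.card = k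

/-- The maximum size of a matching between a family `𝒜` and its shadow in the
containment bipartite graph. -/
noncomputable def nu (𝒜 : Finset (Finset ℕ)) : ℕ :=
  sSup {m | ∃ s ⊆ 𝒜, s.card = m ∧ ∃ f : Finset ℕ → Finset ℕ,
    Set.InjOn f ↑s ∧ ∀ a ∈ s, f a ∈ Finset.shadow 𝒜 ∧ f a ⊆ a}

/-- The initial segment of the colexicographic order on `t`-element subsets of ℕ
of size `m`. -/
def colexSeg (m t : ℕ) : Finset (Finset ℕ) :=
  ((Finset.range (t + m)).powerset).filter (fun S => S.card = t ∧
    (((Finset.range (t + m)).powerset).filter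
      (fun B => B.card = t ∧ toColex B < toColex S)).card < m)

/-- `F` is a `k`-antichain saturated family of subsets of `[n] = {0, …, n-1}`. -/
def AntichainSat (n k : ℕ) (F : Finset (Finset ℕ)) : Prop :=
  (∀ X ∈ F, X ⊆ Finset.range n) ∧
  (¬ ∃ 𝒜 ⊆ F, 𝒜.card = k ∧ IsAntichain (· ⊆ ·) (𝒜 : Set (Finset ℕ))) ∧
  (∀ X : Finset ℕ, X ⊆ Finset.range n → X ∉ F →
    ∃ 𝒜 ⊆ insert X F, 𝒜.card = k ∧ IsAntichain (· ⊆ ·) (𝒜 : Set (Finset ℕ)))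

/-- The antichain saturation number `sat*(n, k)`. -/
noncomputable def satStar (n k : ℕ) : ℕ :=
  sInf {m | ∃ F : Finset (Finset ℕ), AntichainSat n k F ∧ F.card = m}

noncomputable def cAux (k ℓ : ℕ) : ℕ → ℕ
  | 0 => k - 1
  | d + 1 => nu (colexSeg (cAux k ℓ d) (ℓ / 2 - d))

/-- The sequence `c_t` from the paper: `c_t = k - 1` for `t ≥ ⌊ℓ/2⌋` and
`c_t = ν(C(c_{t+1}, t+1))` for `t < ⌊ℓ/2⌋`. -/
noncomputable def cseq (k ℓ t : ℕ) : ℕ :=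
  if ℓ / 2 ≤ t then k - 1 else cAux k ℓ (ℓ / 2 - t)


open Finset

lemma shadow_map' {n : ℕ} (𝒜 : Finset (Finset (Fin n))) :
    Finset.shadow (𝒜.image (fun A => A.map ⟨Fin.val, Fin.val_injective⟩)) =
      (Finset.shadow 𝒜).image (fun A => A.map ⟨Fin.val, Fin.val_injective⟩) := by
  set f : Fin n ↪ ℕ := ⟨Fin.val, Fin.val_injective⟩
  ext t
  simp only [Finset.mem_shadow_iff, Finset.mem_image]
  constructor
  · rintro ⟨s, ⟨A, hA, rfl⟩, a, ha, rfl⟩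
    obtain ⟨x, hx, rfl⟩ := Finset.mem_map.1 ha
    exact ⟨A.erase x, ⟨A, hA, x, hx, rfl⟩, (Finset.map_erase f A x)⟩
  · rintro ⟨s, ⟨A, hA, x, hx, rfl⟩, rfl⟩
    exact ⟨A.map f, ⟨A, hA, rfl⟩, f x, Finset.mem_map_of_mem f hx,
      (Finset.map_erase f A x).symm⟩

lemma card_le_card_shadow' {t : ℕ} (ht : 1 ≤ t) (S : Finset (Finset ℕ))
    (hsub : ∀ A ∈ S, A ⊆ Finset.range (2 * t - 1)) (hsized : ∀ A ∈ S, A.card = t) :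
    S.card ≤ (Finset.shadow S).card := by
  classical
  set n := 2 * t - 1 with hn
  set f : Fin n ↪ ℕ := ⟨Fin.val, Fin.val_injective⟩
  set g : Finset (Fin n) → Finset ℕ := fun B => B.map f with hg
  have hginj : Function.Injective g := fun a b h => Finset.map_injective f h
  set S₀ : Finset (Finset (Fin n)) := Finset.univ.powerset.filter (fun B => g B ∈ S) with hS₀
  have himg : S₀.image g = S := by
    ext A
    simp only [S₀, Finset.mem_image, Finset.mem_filter, Finset.mem_powerset]
    constructor
    · rintro ⟨B, ⟨-, hB⟩, rfl⟩; exact hB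
    · intro hA
      refine ⟨Finset.univ.filter (fun i : Fin n => i.val ∈ A), ⟨Finset.filter_subset _ _, ?_⟩, ?_⟩
        <;> {
        have : g (Finset.univ.filter (fun i : Fin n => i.val ∈ A)) = A := by
          ext x
          simp only [g, Finset.mem_map, Finset.mem_filter, Finset.mem_univ, true_and]
          constructor
          · rintro ⟨i, hi, rfl⟩; exact hi
          · intro hx
            have hxn : x < n := Finset.mem_range.1 (hsub A hA hx)
            exact ⟨⟨x, hxn⟩, hx, rfl⟩
        simp [this, hA] }
  have hsized₀ : (S₀ : Set (Finset (Fin n))).Sized t := by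
    intro B hB
    simp only [S₀, Finset.coe_filter, Set.mem_setOf_eq] at hB
    have := hsized _ hB.2
    rwa [hg, Finset.card_map] at this
  have lym := Finset.card_mul_le_card_shadow_mul hsized₀
  have hcardeq : S₀.card = S.card := by rw [← himg, Finset.card_image_of_injective _ hginj]
  have hshadoweq : (Finset.shadow S₀).card = (Finset.shadow S).card := by
    rw [← himg, shadow_map', Finset.card_image_of_injective _ hginj]
  have hfc : Fintype.card (Fin n) = n := Fintype.card_fin n
  rw [hfc, hcardeq, hshadoweq] at lym
  have hnt : n - t + 1 = t := by omega
  rw [hnt] at lym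
  exact Nat.le_of_mul_le_mul_right lym ht


lemma colexSeg_mem {m t : ℕ} {A : Finset ℕ} :
    A ∈ colexSeg m t ↔ A ⊆ Finset.range (t + m) ∧ A.card = t ∧
    (((Finset.range (t + m)).powerset).filter
      (fun B => B.card = t ∧ toColex B < toColex A)).card < m := by
  simp only [colexSeg, Finset.mem_filter, Finset.mem_powerset, and_assoc]

lemma colexSeg_subset_range {m t : ℕ} (hm : m ≤ Nat.choose (2 * t - 1) t) :
    ∀ A ∈ colexSeg m t, A ⊆ Finset.range (2 * t - 1) := by
  intro A hA
  obtain ⟨hAsub, hcard, hrank⟩ := colexSeg_mem.1 hA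
  intro x hx
  rw [Finset.mem_range]
  by_contra hx2
  push_neg at hx2
  set M := A.max' ⟨x, hx⟩ with hM
  have hMA : M ∈ A := Finset.max'_mem _ _
  have hxM : x ≤ M := Finset.le_max' _ _ hx
  have hMlt : M < t + m := Finset.mem_range.1 (hAsub hMA)
  have hsub2 : Finset.powersetCard t (Finset.range M) ⊆
      ((Finset.range (t + m)).powerset).filter
      (fun B => B.card = t ∧ toColex B < toColex A) := by
    intro B hB
    rw [Finset.mem_powersetCard] at hB
    obtain ⟨hBsub, hBcard⟩ := hB
    have hMB : M ∉ B := fun h => by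
      have := Finset.mem_range.1 (hBsub h); omega
    rw [Finset.mem_filter, Finset.mem_powerset]
    refine ⟨hBsub.trans (by intro y hy; rw [Finset.mem_range] at *; omega), hBcard, ?_⟩
    rw [Finset.Colex.toColex_lt_toColex]
    constructor
    · rintro rfl; exact hMB hMA
    · intro a haB haA
      exact ⟨M, hMA, hMB, (Finset.mem_range.1 (hBsub haB)).le⟩
  have h1 : Nat.choose M t ≤ ((((Finset.range (t + m)).powerset).filter
      (fun B => B.card = t ∧ toColex B < toColex A))).card := by
    calc Nat.choose M t = (Finset.powersetCard t (Finset.range M)).card := by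
          rw [Finset.card_powersetCard, Finset.card_range]
      _ ≤ _ := Finset.card_le_card hsub2
  have h2 : Nat.choose (2 * t - 1) t ≤ Nat.choose M t :=
    Nat.choose_le_choose t (by omega)
  omega

/-- For `t > ⌊ℓ/2⌋`, an initial segment of colex on layer `t` of size at most
`k - 1` has a matching into its shadow saturating it. -/
theorem stmt14 (k ℓ t m : ℕ) (hk : 2 ≤ k)
    (hl1 : k - 1 ≤ Nat.choose ℓ (ℓ / 2)) (hl2 : ∀ j < ℓ, Nat.choose j (j / 2) < k - 1)
    (ht : ℓ / 2 < t) (hm : m ≤ k - 1) :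
    nu (colexSeg m t) = (colexSeg m t).card := by
  classical
  have ht1 : 1 ≤ t := by omega
  have hlle : ℓ ≤ 2 * t - 1 := by omega
  have hm2 : m ≤ Nat.choose (2 * t - 1) t := by
    calc m ≤ k - 1 := hm
      _ ≤ Nat.choose ℓ (ℓ / 2) := hl1
      _ ≤ Nat.choose (2 * t - 1) (ℓ / 2) := Nat.choose_le_choose _ hlle
      _ ≤ Nat.choose (2 * t - 1) ((2 * t - 1) / 2) := Nat.choose_le_middle _ _
      _ = Nat.choose (2 * t - 1) (t - 1) := by congr 1; omega
      _ = Nat.choose (2 * t - 1) t := by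
          have : (2 * t - 1) - t = t - 1 := by omega
          rw [← this, Nat.choose_symm (by omega)]
  set C := colexSeg m t with hC
  have hsub : ∀ A ∈ C, A ⊆ Finset.range (2 * t - 1) := colexSeg_subset_range hm2
  have hsized : ∀ A ∈ C, A.card = t := fun A hA => (colexSeg_mem.1 hA).2.1
  -- Hall's theorem
  have hhall : ∀ s : Finset {A // A ∈ C}, s.card ≤ (s.biUnion
      (fun A : {A // A ∈ C} => (Finset.shadow C).filter (· ⊆ A.1))).card := by
    intro s
    set S : Finset (Finset ℕ) := s.image Subtype.val with hS
    have hScard : S.card = s.card := Finset.card_image_of_injective _ Subtype.val_injective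
    have hSC : ∀ A ∈ S, A ∈ C := by
      intro A hA
      obtain ⟨B, -, rfl⟩ := Finset.mem_image.1 hA
      exact B.2
    have hkey : S.card ≤ (Finset.shadow S).card :=
      card_le_card_shadow' ht1 S (fun A hA => hsub A (hSC A hA))
        (fun A hA => hsized A (hSC A hA))
    have hssub : Finset.shadow S ⊆ s.biUnion
        (fun A : {A // A ∈ C} => (Finset.shadow C).filter (· ⊆ A.1)) := by
      intro B hB
      obtain ⟨A, hA, a, ha, rfl⟩ := Finset.mem_shadow_iff.1 hB
      obtain ⟨A', hA', hval⟩ := Finset.mem_image.1 hA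
      refine Finset.mem_biUnion.2 ⟨A', hA', ?_⟩
      rw [Finset.mem_filter]
      subst hval
      exact ⟨Finset.erase_mem_shadow A'.2 ha, Finset.erase_subset _ _⟩
    calc s.card = S.card := hScard.symm
      _ ≤ (Finset.shadow S).card := hkey
      _ ≤ _ := Finset.card_le_card hssub
  obtain ⟨f, hfinj, hf⟩ := (Finset.all_card_le_biUnion_card_iff_exists_injective
      (fun A : {A // A ∈ C} => (Finset.shadow C).filter (· ⊆ A.1))).1 hhall
  set F : Finset ℕ → Finset ℕ := fun A => if h : A ∈ C then f ⟨A, h⟩ else ∅ with hF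
  have hmem : C.card ∈ {n | ∃ s ⊆ C, s.card = n ∧ ∃ f : Finset ℕ → Finset ℕ,
      Set.InjOn f ↑s ∧ ∀ a ∈ s, f a ∈ Finset.shadow C ∧ f a ⊆ a} := by
    refine ⟨C, Finset.Subset.refl _, rfl, F, ?_, ?_⟩
    · intro a ha b hb hab
      rw [Finset.mem_coe] at ha hb
      rw [hF] at hab
      simp only [dif_pos ha, dif_pos hb] at hab
      have := hfinj hab
      exact congrArg Subtype.val this
    · intro a ha
      have := hf ⟨a, ha⟩
      rw [Finset.mem_filter] at this
      rw [hF]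
      simp only [dif_pos ha]
      exact this
  have hub : ∀ x ∈ {n | ∃ s ⊆ C, s.card = n ∧ ∃ f : Finset ℕ → Finset ℕ,
      Set.InjOn f ↑s ∧ ∀ a ∈ s, f a ∈ Finset.shadow C ∧ f a ⊆ a}, x ≤ C.card := by
    rintro x ⟨s, hs, rfl, -⟩
    exact Finset.card_le_card hs
  rw [nu]
  exact le_antisymm (csSup_le ⟨_, hmem⟩ hub) (le_csSup ⟨C.card, hub⟩ hmem)
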